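/- Let G be the group presented by generators a, b with relations a³ = b³ = 1, (ab)³ = (a⁻¹b)³ = 1, and set c = [b,a] = b·a·b⁻¹·a⁻¹. Then c³ = 1, the center of G equals ⟨c⟩, b·a·b⁻¹ commutes with a, and a·b·a⁻¹ commutes with b. -/

import Mathlib

namespace Stmt10

private def ra : FreeGroup (Fin 2) := FreeGroup.of 0
private def rb : FreeGroup (Fin 2) := FreeGroup.of 1

/-- Relators: `a³ = b³ = 1`, `(ab)³ = 1`, `(a⁻¹b)³ = 1`. -/
def rels : Set (FreeGroup (Fin 2)) :=
  {ra ^ 3, rb ^ 3, (ra * rb) ^ 3, (ra⁻¹ * rb) ^ 3}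

abbrev G := PresentedGroup rels

def a : G := PresentedGroup.of 0
def b : G := PresentedGroup.of 1

/-- `c = [b,a] = b·a·b⁻¹·a⁻¹`. -/
def c : G := b * a * b⁻¹ * a⁻¹

/-! ### The concrete Heisenberg group of order 27 -/

def H : Type := ZMod 3 × ZMod 3 × ZMod 3

instance : One H := ⟨((0:ZMod 3), (0:ZMod 3), (0:ZMod 3))⟩
instance : Mul H := ⟨fun x y => (x.1 + y.1, x.2.1 + y.2.1, x.2.2 + y.2.2 + x.2.1 * y.1)⟩
instance : Inv H := ⟨fun x => (-x.1, -x.2.1, -x.2.2 + x.2.1 * x.1)⟩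
instance : DecidableEq H := inferInstanceAs (DecidableEq (ZMod 3 × ZMod 3 × ZMod 3))

theorem H.mul_def (x y : H) :
    x * y = (x.1 + y.1, x.2.1 + y.2.1, x.2.2 + y.2.2 + x.2.1 * y.1) := rfl
theorem H.inv_def (x : H) : x⁻¹ = (-x.1, -x.2.1, -x.2.2 + x.2.1 * x.1) := rfl
theorem H.one_def : (1 : H) = ((0:ZMod 3), (0:ZMod 3), (0:ZMod 3)) := rfl
theorem H.ext {x y : H} (h1 : x.1 = y.1) (h2 : x.2.1 = y.2.1) (h3 : x.2.2 = y.2.2) : x = y :=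
  Prod.ext h1 (Prod.ext h2 h3)

instance : Group H where
  mul_assoc x y z := H.ext (by show x.1 + y.1 + z.1 = x.1 + (y.1 + z.1); ring)
    (by show x.2.1 + y.2.1 + z.2.1 = x.2.1 + (y.2.1 + z.2.1); ring)
    (by
      show x.2.2 + y.2.2 + x.2.1 * y.1 + z.2.2 + (x.2.1 + y.2.1) * z.1 =
        x.2.2 + (y.2.2 + z.2.2 + y.2.1 * z.1) + x.2.1 * (y.1 + z.1)
      ring)
  one_mul x := H.ext (by show (0:ZMod 3) + x.1 = x.1; ring)
    (by show (0:ZMod 3) + x.2.1 = x.2.1; ring)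
    (by show (0:ZMod 3) + x.2.2 + 0 * x.1 = x.2.2; ring)
  mul_one x := H.ext (by show x.1 + (0:ZMod 3) = x.1; ring)
    (by show x.2.1 + (0:ZMod 3) = x.2.1; ring)
    (by show x.2.2 + (0:ZMod 3) + x.2.1 * 0 = x.2.2; ring)
  inv_mul_cancel x := H.ext (by show -x.1 + x.1 = (0:ZMod 3); ring)
    (by show -x.2.1 + x.2.1 = (0:ZMod 3); ring)
    (by show -x.2.2 + x.2.1 * x.1 + x.2.2 + -x.2.1 * x.1 = (0:ZMod 3); ring)

def A : H := ((1:ZMod 3), 0, 0)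
def B : H := ((0:ZMod 3), 1, 0)

def fH : Fin 2 → H := ![A, B]

theorem fH_rels : ∀ r ∈ rels, FreeGroup.lift fH r = 1 := by
  intro r hr
  simp only [rels, Set.mem_insert_iff, Set.mem_singleton_iff] at hr
  rcases hr with rfl | rfl | rfl | rfl <;>
    simp only [ra, rb, map_pow, map_mul, map_inv, FreeGroup.lift_apply_of] <;>
    · show _ = (1 : H); decide

def φ : G →* H := PresentedGroup.toGroup fH_rels

theorem φa : φ a = A := by
  show φ (PresentedGroup.of 0) = A
  rw [φ, PresentedGroup.toGroup.of]; rfl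

theorem φb : φ b = B := by
  show φ (PresentedGroup.of 1) = B
  rw [φ, PresentedGroup.toGroup.of]; rfl

theorem φc : φ c = B * A * B⁻¹ * A⁻¹ := by
  unfold c
  simp only [map_mul, map_inv, φa, φb]

theorem three_dvd_of_zpow (j : ℤ) (h : (B * A * B⁻¹ * A⁻¹) ^ j = 1) : (3:ℤ) ∣ j := by
  haveI : Fact (Nat.Prime 3) := ⟨by norm_num⟩
  have ho : orderOf (B * A * B⁻¹ * A⁻¹) = 3 :=
    orderOf_eq_prime (by decide) (by decide)
  have := (orderOf_dvd_iff_zpow_eq_one (x := B * A * B⁻¹ * A⁻¹) (i := j)).mpr h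
  rwa [ho] at this

/-! ### Relations in `G` -/

theorem rel_one : ∀ r ∈ rels, PresentedGroup.mk rels r = 1 := fun _ hr =>
  (QuotientGroup.eq_one_iff _).mpr (Subgroup.subset_normalClosure hr)

theorem ha : a ^ 3 = 1 := by
  have h := rel_one (ra ^ 3) (by simp [rels])
  rw [map_pow] at h
  exact h

theorem hb : b ^ 3 = 1 := by
  have h := rel_one (rb ^ 3) (by simp [rels])
  rw [map_pow] at h
  exact h

theorem hab : (a * b) ^ 3 = 1 := by
  have h := rel_one ((ra * rb) ^ 3) (by simp [rels])
  rw [map_pow, map_mul] at h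
  exact h

theorem haib : (a⁻¹ * b) ^ 3 = 1 := by
  have h := rel_one ((ra⁻¹ * rb) ^ 3) (by simp [rels])
  rw [map_pow, map_mul, map_inv] at h
  exact h

theorem hab' : a * b * a * b * a * b = 1 := by
  rw [← hab, pow_three']; group

theorem haib' : a⁻¹ * b * a⁻¹ * b * a⁻¹ * b = 1 := by
  rw [← haib, pow_three']; group

theorem R1 : b * a * b = a⁻¹ * b⁻¹ * a⁻¹ := by
  have h : a⁻¹ * (a * b * a * b * a * b) * (b⁻¹ * a⁻¹) = a⁻¹ * b⁻¹ * a⁻¹ := by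
    rw [hab']; group
  rw [← h]; group

theorem R2 : b * a⁻¹ * b = a * b⁻¹ * a := by
  have h : a * (a⁻¹ * b * a⁻¹ * b * a⁻¹ * b) * (b⁻¹ * a) = a * b⁻¹ * a := by
    rw [haib']; group
  rw [← h]; group

theorem R2inv : b⁻¹ * a * b⁻¹ = a⁻¹ * b * a⁻¹ := by
  have h : b⁻¹ * a * b⁻¹ = (b * a⁻¹ * b)⁻¹ := by group
  rw [h, R2]; group

theorem R1m : a * b * a = b⁻¹ * a⁻¹ * b⁻¹ := by
  have h : a * b * a = (a⁻¹ * b⁻¹ * a⁻¹)⁻¹ := by group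
  rw [h, ← R1]; group

theorem ha3 : a * a * a = 1 := by rw [← ha, pow_three']

theorem hb3 : b * b * b = 1 := by rw [← hb, pow_three']

theorem haa : a⁻¹ * a⁻¹ = a := by
  have h : (a * a * a) * (a⁻¹ * a⁻¹) = a := by group
  rw [ha3, one_mul] at h
  exact h

theorem hbb : b⁻¹ * b⁻¹ = b := by
  have h : (b * b * b) * (b⁻¹ * b⁻¹) = b := by group
  rw [hb3, one_mul] at h
  exact h

theorem haa' : a * a = a⁻¹ := by
  have h : (a * a * a) * a⁻¹ = a * a := by group
  rw [ha3, one_mul] at h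
  exact h.symm

theorem hbb' : b * b = b⁻¹ := by
  have h : (b * b * b) * b⁻¹ = b * b := by group
  rw [hb3, one_mul] at h
  exact h.symm

theorem f1 : b⁻¹ * a * b⁻¹ * a = a⁻¹ * b := by
  have h : b⁻¹ * a * b⁻¹ * a = (b⁻¹ * a * b⁻¹) * a := by group
  rw [h, R2inv]; group

theorem f1m : a⁻¹ * b * a⁻¹ * b = b⁻¹ * a := by
  have h : a⁻¹ * b * a⁻¹ * b = (a⁻¹ * b * a⁻¹) * b := by group
  rw [h, R2inv.symm]; group

theorem comm1 : Commute (b * a * b⁻¹) a := by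
  show b * a * b⁻¹ * a = a * (b * a * b⁻¹)
  calc b * a * b⁻¹ * a
      = (b * a * b) * (b⁻¹ * b⁻¹) * a := by group
    _ = (a⁻¹ * b⁻¹ * a⁻¹) * b * a := by rw [R1, hbb]
    _ = a⁻¹ * b⁻¹ * (a⁻¹ * b) * a := by group
    _ = a⁻¹ * b⁻¹ * (b⁻¹ * a * b⁻¹ * a) * a := by rw [← f1]
    _ = a⁻¹ * (b⁻¹ * b⁻¹) * (a * b⁻¹) * (a * a) := by group
    _ = a⁻¹ * b * (a * b⁻¹) * a⁻¹ := by rw [hbb, haa']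
    _ = a⁻¹ * (b * a * b) * (b⁻¹ * b⁻¹) * a⁻¹ := by group
    _ = a⁻¹ * (a⁻¹ * b⁻¹ * a⁻¹) * b * a⁻¹ := by rw [R1, hbb]
    _ = (a⁻¹ * a⁻¹) * b⁻¹ * (a⁻¹ * b * a⁻¹) := by group
    _ = a * b⁻¹ * (b⁻¹ * a * b⁻¹) := by rw [haa, ← R2inv]
    _ = a * (b⁻¹ * b⁻¹) * (a * b⁻¹) := by group
    _ = a * b * (a * b⁻¹) := by rw [hbb]
    _ = a * (b * a * b⁻¹) := by group

theorem comm2 : Commute (a * b * a⁻¹) b := by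
  show a * b * a⁻¹ * b = b * (a * b * a⁻¹)
  calc a * b * a⁻¹ * b
      = (a * b * a) * (a⁻¹ * a⁻¹) * b := by group
    _ = (b⁻¹ * a⁻¹ * b⁻¹) * a * b := by rw [R1m, haa]
    _ = b⁻¹ * a⁻¹ * (b⁻¹ * a) * b := by group
    _ = b⁻¹ * a⁻¹ * (a⁻¹ * b * a⁻¹ * b) * b := by rw [← f1m]
    _ = b⁻¹ * (a⁻¹ * a⁻¹) * (b * a⁻¹) * (b * b) := by group
    _ = b⁻¹ * a * (b * a⁻¹) * b⁻¹ := by rw [haa, hbb']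
    _ = b⁻¹ * (a * b * a) * (a⁻¹ * a⁻¹) * b⁻¹ := by group
    _ = b⁻¹ * (b⁻¹ * a⁻¹ * b⁻¹) * a * b⁻¹ := by rw [R1m, haa]
    _ = (b⁻¹ * b⁻¹) * a⁻¹ * (b⁻¹ * a * b⁻¹) := by group
    _ = b * a⁻¹ * (a⁻¹ * b * a⁻¹) := by rw [hbb, R2inv]
    _ = b * (a⁻¹ * a⁻¹) * (b * a⁻¹) := by group
    _ = b * a * (b * a⁻¹) := by rw [haa]
    _ = b * (a * b * a⁻¹) := by group

theorem hca : Commute c a := by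
  have h : c = (b * a * b⁻¹) * a⁻¹ := by unfold c; group
  rw [h]
  exact comm1.mul_left (Commute.refl a).inv_left

theorem hcb : Commute c b := by
  have h : c = b * (a * b * a⁻¹)⁻¹ := by unfold c; group
  rw [h]
  exact (Commute.refl b).mul_left comm2.inv_left

theorem hc3 : c ^ 3 = 1 := by
  have h : c = (b * a * b⁻¹) * a⁻¹ := by unfold c; group
  rw [h, (comm1.inv_right).mul_pow]
  have h2 : (b * a * b⁻¹) ^ 3 = b * (a * a * a) * b⁻¹ := by
    rw [pow_three']; group
  rw [h2, ha3, inv_pow, ha]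
  group

/-! ### Normal form -/

theorem keyA (i : ℤ) : b * a ^ i = (c ^ i * a ^ i) * b := by
  have hscb : SemiconjBy b a (c * a) := by
    show b * a = (c * a) * b
    unfold c; group
  have h := hscb.zpow_right i
  rw [show ((c * a) ^ i) = c ^ i * a ^ i from hca.mul_zpow i] at h
  exact h

theorem keyAinv (i : ℤ) : b⁻¹ * a ^ i = (c ^ (-i) * a ^ i) * b⁻¹ := by
  have h2 : a ^ i * b⁻¹ = b⁻¹ * (c ^ i * a ^ i) :=
    mul_left_cancel (a := b)
      (by rw [show b * (a ^ i * b⁻¹) = (b * a ^ i) * b⁻¹ from by group, keyA]; group)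
  have h3 : (c ^ (-i) * a ^ i) * b⁻¹ = b⁻¹ * a ^ i := by
    calc (c ^ (-i) * a ^ i) * b⁻¹ = c ^ (-i) * (a ^ i * b⁻¹) := by group
      _ = c ^ (-i) * (b⁻¹ * (c ^ i * a ^ i)) := by rw [h2]
      _ = (c ^ (-i) * b⁻¹) * (c ^ i * a ^ i) := by group
      _ = (b⁻¹ * c ^ (-i)) * (c ^ i * a ^ i) := by rw [(hcb.zpow_left (-i)).inv_right.eq]
      _ = b⁻¹ * a ^ i := by group
  exact h3.symm

theorem keyB (j i : ℤ) : b ^ j * a ^ i = (c ^ (i * j) * a ^ i) * b ^ j := by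
  induction j using Int.induction_on with
  | zero => simp
  | succ k ih =>
    calc b ^ ((k : ℤ) + 1) * a ^ i = b ^ (k : ℤ) * (b * a ^ i) := by
          rw [zpow_add_one]; group
      _ = b ^ (k : ℤ) * ((c ^ i * a ^ i) * b) := by rw [keyA]
      _ = (b ^ (k : ℤ) * c ^ i) * (a ^ i * b) := by group
      _ = (c ^ i * b ^ (k : ℤ)) * (a ^ i * b) := by rw [← (hcb.zpow_zpow i (k : ℤ)).eq]
      _ = c ^ i * (b ^ (k : ℤ) * a ^ i) * b := by group
      _ = c ^ i * ((c ^ (i * (k : ℤ)) * a ^ i) * b ^ (k : ℤ)) * b := by rw [ih]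
      _ = (c ^ i * c ^ (i * (k : ℤ))) * a ^ i * (b ^ (k : ℤ) * b) := by group
      _ = (c ^ (i * ((k : ℤ) + 1)) * a ^ i) * b ^ ((k : ℤ) + 1) := by
          rw [← zpow_add c i (i * (k : ℤ)), ← zpow_add_one b,
            show i + i * (k : ℤ) = i * ((k : ℤ) + 1) by ring]
  | pred k ih =>
    calc b ^ (-(k : ℤ) - 1) * a ^ i = b ^ (-(k : ℤ)) * (b⁻¹ * a ^ i) := by
          rw [zpow_sub_one]; group
      _ = b ^ (-(k : ℤ)) * ((c ^ (-i) * a ^ i) * b⁻¹) := by rw [keyAinv]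
      _ = (b ^ (-(k : ℤ)) * c ^ (-i)) * (a ^ i * b⁻¹) := by group
      _ = (c ^ (-i) * b ^ (-(k : ℤ))) * (a ^ i * b⁻¹) := by
          rw [← (hcb.zpow_zpow (-i) (-(k : ℤ))).eq]
      _ = c ^ (-i) * (b ^ (-(k : ℤ)) * a ^ i) * b⁻¹ := by group
      _ = c ^ (-i) * ((c ^ (i * (-(k : ℤ))) * a ^ i) * b ^ (-(k : ℤ))) * b⁻¹ := by rw [ih]
      _ = (c ^ (-i) * c ^ (i * (-(k : ℤ)))) * a ^ i * (b ^ (-(k : ℤ)) * b⁻¹) := by group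
      _ = (c ^ (i * (-(k : ℤ) - 1)) * a ^ i) * b ^ (-(k : ℤ) - 1) := by
          rw [← zpow_add c (-i) (i * (-(k : ℤ))), ← zpow_sub_one b,
            show -i + i * (-(k : ℤ)) = i * (-(k : ℤ) - 1) by ring]

theorem keyB1 (j : ℤ) : b ^ j * a = (c ^ j * a) * b ^ j := by
  have h := keyB j 1
  simpa using h

theorem normal_form (g : G) : ∃ k i j : ℤ, g = c ^ k * a ^ i * b ^ j := by
  let S : Subgroup G :=
    { carrier := {g | ∃ k i j : ℤ, g = c ^ k * a ^ i * b ^ j}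
      one_mem' := ⟨0, 0, 0, by simp⟩
      mul_mem' := by
        rintro x y ⟨k, i, j, rfl⟩ ⟨r, p, q, rfl⟩
        refine ⟨k + r + p * j, i + p, j + q, ?_⟩
        have h1 : (a ^ i * b ^ j) * c ^ r = c ^ r * (a ^ i * b ^ j) :=
          (((hca.zpow_right i).mul_right (hcb.zpow_right j)).zpow_left r).eq.symm
        have h2 : a ^ i * c ^ (p * j) = c ^ (p * j) * a ^ i :=
          ((hca.zpow_right i).zpow_left (p * j)).eq.symm
        calc (c ^ k * a ^ i * b ^ j) * (c ^ r * a ^ p * b ^ q)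
            = c ^ k * ((a ^ i * b ^ j) * c ^ r) * (a ^ p * b ^ q) := by group
          _ = c ^ k * (c ^ r * (a ^ i * b ^ j)) * (a ^ p * b ^ q) := by rw [h1]
          _ = (c ^ k * c ^ r) * (a ^ i * (b ^ j * a ^ p)) * b ^ q := by group
          _ = (c ^ k * c ^ r) * (a ^ i * ((c ^ (p * j) * a ^ p) * b ^ j)) * b ^ q := by
              rw [keyB]
          _ = (c ^ k * c ^ r) * ((a ^ i * c ^ (p * j)) * (a ^ p * (b ^ j * b ^ q))) := by group
          _ = (c ^ k * c ^ r) * ((c ^ (p * j) * a ^ i) * (a ^ p * (b ^ j * b ^ q))) := by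
              rw [h2]
          _ = ((c ^ k * c ^ r) * c ^ (p * j)) * (a ^ i * a ^ p) * (b ^ j * b ^ q) := by group
          _ = c ^ (k + r + p * j) * a ^ (i + p) * b ^ (j + q) := by
              rw [← zpow_add c k r, ← zpow_add c (k + r) (p * j), ← zpow_add a i p,
                ← zpow_add b j q]
      inv_mem' := by
        rintro x ⟨k, i, j, rfl⟩
        refine ⟨i * j - k, -i, -j, ?_⟩
        rw [eq_comm, eq_inv_iff_mul_eq_one]
        calc (c ^ (i * j - k) * a ^ (-i) * b ^ (-j)) * (c ^ k * a ^ i * b ^ j)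
            = c ^ (i * j - k) * a ^ (-i) * (b ^ (-j) * c ^ k) * (a ^ i * b ^ j) := by group
          _ = c ^ (i * j - k) * a ^ (-i) * (c ^ k * b ^ (-j)) * (a ^ i * b ^ j) := by
              rw [← (hcb.zpow_zpow k (-j)).eq]
          _ = c ^ (i * j - k) * (a ^ (-i) * c ^ k) * ((b ^ (-j) * a ^ i) * b ^ j) := by group
          _ = c ^ (i * j - k) * (c ^ k * a ^ (-i)) * ((b ^ (-j) * a ^ i) * b ^ j) := by
              rw [← ((hca.zpow_right (-i)).zpow_left k).eq]
          _ = c ^ (i * j - k) * (c ^ k * a ^ (-i)) *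
                (((c ^ (i * -j) * a ^ i) * b ^ (-j)) * b ^ j) := by rw [keyB]
          _ = c ^ (i * j - k) * c ^ k * ((a ^ (-i) * c ^ (i * -j)) *
                (a ^ i * (b ^ (-j) * b ^ j))) := by group
          _ = c ^ (i * j - k) * c ^ k * ((c ^ (i * -j) * a ^ (-i)) *
                (a ^ i * (b ^ (-j) * b ^ j))) := by
              rw [← ((hca.zpow_right (-i)).zpow_left (i * -j)).eq]
          _ = ((c ^ (i * j - k) * c ^ k) * c ^ (i * -j)) * (a ^ (-i) * a ^ i) *
                (b ^ (-j) * b ^ j) := by group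
          _ = 1 := by
              rw [← zpow_add c (i * j - k) k, ← zpow_add c (i * j - k + k) (i * -j),
                ← zpow_add a (-i) i, ← zpow_add b (-j) j,
                show i * j - k + k + i * -j = 0 by ring, show -i + i = 0 by ring,
                show -j + j = 0 by ring]
              simp }
  have hmem : g ∈ S := by
    refine PresentedGroup.generated_by rels S ?_ g
    intro x
    fin_cases x
    · exact ⟨0, 1, 0, by simp; rfl⟩
    · exact ⟨0, 0, 1, by simp; rfl⟩
  exact hmem

theorem c_mem_center : c ∈ Subgroup.center G := by
  rw [Subgroup.mem_center_iff]
  intro g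
  obtain ⟨k, i, j, rfl⟩ := normal_form g
  have h : Commute c (c ^ k * a ^ i * b ^ j) :=
    (((Commute.refl c).zpow_right k).mul_right (hca.zpow_right i)).mul_right
      (hcb.zpow_right j)
  exact h.eq.symm

theorem center_eq : Subgroup.center G = Subgroup.zpowers c := by
  apply le_antisymm
  · intro g hg
    obtain ⟨k, i, j, rfl⟩ := normal_form g
    have hga : a * (c ^ k * a ^ i * b ^ j) = (c ^ k * a ^ i * b ^ j) * a :=
      (Subgroup.mem_center_iff.mp hg) a
    have hgb : b * (c ^ k * a ^ i * b ^ j) = (c ^ k * a ^ i * b ^ j) * b :=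
      (Subgroup.mem_center_iff.mp hg) b
    have hax : a * (c ^ k * a ^ i * b ^ j) = c ^ k * (a ^ i * (a * b ^ j)) := by
      calc a * (c ^ k * a ^ i * b ^ j) = (a * c ^ k) * (a ^ i * b ^ j) := by group
        _ = (c ^ k * a) * (a ^ i * b ^ j) := by rw [((hca.zpow_left k).symm).eq]
        _ = c ^ k * ((a * a ^ i) * b ^ j) := by group
        _ = c ^ k * ((a ^ i * a) * b ^ j) := by rw [(Commute.self_zpow a i).eq]
        _ = c ^ k * (a ^ i * (a * b ^ j)) := by group
    have hcj : c ^ j = 1 := by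
      have e1 : (c ^ k * a ^ i * b ^ j) * a = c ^ j * (a * (c ^ k * a ^ i * b ^ j)) := by
        calc (c ^ k * a ^ i * b ^ j) * a
            = c ^ k * a ^ i * ((c ^ j * a) * b ^ j) := by
              rw [show (c ^ k * a ^ i * b ^ j) * a = c ^ k * a ^ i * (b ^ j * a) from by
                group, keyB1]
          _ = c ^ k * (a ^ i * c ^ j) * (a * b ^ j) := by group
          _ = c ^ k * (c ^ j * a ^ i) * (a * b ^ j) := by
              rw [← ((hca.zpow_right i).zpow_left j).eq]
          _ = (c ^ k * c ^ j) * (a ^ i * (a * b ^ j)) := by group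
          _ = (c ^ j * c ^ k) * (a ^ i * (a * b ^ j)) := by
              rw [← zpow_add c k j, add_comm k j, zpow_add]
          _ = c ^ j * (a * (c ^ k * a ^ i * b ^ j)) := by rw [hax]; group
      rw [← hga] at e1
      exact (mul_eq_right (a := c ^ j)).mp e1.symm
    have hci : c ^ i = 1 := by
      have e1 : b * (c ^ k * a ^ i * b ^ j) = c ^ i * ((c ^ k * a ^ i * b ^ j) * b) := by
        calc b * (c ^ k * a ^ i * b ^ j) = (b * c ^ k) * (a ^ i * b ^ j) := by group
          _ = (c ^ k * b) * (a ^ i * b ^ j) := by rw [((hcb.zpow_left k).symm).eq]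
          _ = c ^ k * ((b * a ^ i) * b ^ j) := by group
          _ = c ^ k * (((c ^ i * a ^ i) * b) * b ^ j) := by rw [keyA]
          _ = (c ^ k * c ^ i) * (a ^ i * (b * b ^ j)) := by group
          _ = (c ^ i * c ^ k) * (a ^ i * (b * b ^ j)) := by
              rw [← zpow_add c k i, add_comm k i, zpow_add]
          _ = (c ^ i * c ^ k) * (a ^ i * (b ^ j * b)) := by rw [(Commute.self_zpow b j).eq]
          _ = c ^ i * ((c ^ k * a ^ i * b ^ j) * b) := by group
      rw [hgb] at e1
      exact (mul_eq_right (a := c ^ i)).mp e1.symm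
    have hdvdi : (3:ℤ) ∣ i := by
      apply three_dvd_of_zpow
      have h := congrArg φ hci
      rwa [map_zpow, map_one, φc] at h
    have hdvdj : (3:ℤ) ∣ j := by
      apply three_dvd_of_zpow
      have h := congrArg φ hcj
      rwa [map_zpow, map_one, φc] at h
    obtain ⟨m, rfl⟩ := hdvdi
    obtain ⟨n, rfl⟩ := hdvdj
    have hai : a ^ ((3:ℤ) * m) = 1 := by
      rw [zpow_mul, show (3:ℤ) = ((3:ℕ):ℤ) from rfl, zpow_natCast, ha, one_zpow]
    have hbj : b ^ ((3:ℤ) * n) = 1 := by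
      rw [zpow_mul, show (3:ℤ) = ((3:ℕ):ℤ) from rfl, zpow_natCast, hb, one_zpow]
    rw [hai, hbj, mul_one, mul_one]
    exact Subgroup.zpow_mem _ (Subgroup.mem_zpowers c) k
  · exact Subgroup.zpowers_le.mpr c_mem_center

theorem properties_of_c :
    c ^ 3 = 1 ∧ Subgroup.center G = Subgroup.zpowers c ∧
    Commute (b * a * b⁻¹) a ∧ Commute (a * b * a⁻¹) b :=
  ⟨hc3, center_eq, comm1, comm2⟩

end Stmt10
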